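/- Let A be a real symmetric negative definite n×n matrix, let J be a diagonal n×n matrix whose diagonal entries lie in (0,1), and let Q be a diagonal n×n matrix such that all diagonal entries of J⊗J + Q⊗Q lie in (0,1). Then for ANY continuous probability density f on (0,∞) (no moment conditions required): (a) M := ∫₀^∞ f(τ)·exp(τA)dτ exists, is symmetric positive definite with largest eigenvalue strictly less than 1, and every eigenvalue of J·M is real, positive, and strictly less than 1; (b) M₂ := ∫₀^∞ f(τ)·(exp(τA)⊗exp(τA))dτ exists and every eigenvalue of (J⊗J + Q⊗Q)·M₂ has modulus strictly less than 1. (Remark 1: existence of the first two steady-state moments irrespective of the inter-event distribution.) -/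

import Mathlib

open MeasureTheory Matrix Filter NormedSpace Kronecker

attribute [local instance] Matrix.normedAddCommGroup Matrix.normedSpace

/-- All complex eigenvalues of the real matrix `X` have modulus strictly less than one. -/
def specLt1 {m : Type*} [Fintype m] [DecidableEq m] (X : Matrix m m ℝ) : Prop :=
  ∀ μ ∈ spectrum ℂ (X.map (algebraMap ℝ ℂ)), ‖μ‖ < 1

namespace TTSHS

variable {N : Type*} [Fintype N] [DecidableEq N]

noncomputable def matCENorm : ContinuousENorm (Matrix N N ℝ) :=
  NormedAddCommGroup.toENormedAddCommMonoid.toContinuousENorm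

noncomputable def matPMS : TopologicalSpace.PseudoMetrizableSpace (Matrix N N ℝ) :=
  inferInstanceAs (TopologicalSpace.PseudoMetrizableSpace (N → N → ℝ))

attribute [local instance] matCENorm matPMS

noncomputable def entryCLM (i j : N) : Matrix N N ℝ →L[ℝ] ℝ :=
  { toFun := fun X => X i j
    map_add' := fun _ _ => rfl
    map_smul' := fun _ _ => rfl
    cont := (continuous_apply j).comp (continuous_apply i) }

omit [DecidableEq N] in
lemma integral_matrix_entry {s : Set ℝ} {F : ℝ → Matrix N N ℝ} (hF : IntegrableOn F s)
    (i j : N) : (∫ τ in s, F τ) i j = ∫ τ in s, F τ i j :=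
  ((entryCLM i j).integral_comp_comm hF).symm

omit [DecidableEq N] in
lemma norm_mul_le' (X Y : Matrix N N ℝ) :
    ‖X * Y‖ ≤ (Fintype.card N : ℝ) * ‖X‖ * ‖Y‖ := by
  have h0 : (0:ℝ) ≤ (Fintype.card N : ℝ) * ‖X‖ * ‖Y‖ := by positivity
  rw [Matrix.norm_le_iff h0]
  intro i j
  calc ‖(X * Y) i j‖ = |∑ k, X i k * Y k j| := by rw [Matrix.mul_apply]; rfl
    _ ≤ ∑ k, |X i k * Y k j| := Finset.abs_sum_le_sum_abs _ _
    _ ≤ ∑ _k : N, ‖X‖ * ‖Y‖ := Finset.sum_le_sum fun k _ => by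
        rw [abs_mul]
        exact mul_le_mul (Matrix.norm_entry_le_entrywise_sup_norm X)
          (Matrix.norm_entry_le_entrywise_sup_norm Y) (abs_nonneg _) (norm_nonneg _)
    _ = _ := by rw [Finset.sum_const, Finset.card_univ, nsmul_eq_mul, mul_assoc]

lemma conjT_posDef {M B : Matrix N N ℝ} (hM : M.PosDef) (hB : IsUnit B) :
    (Bᴴ * M * B).PosDef := by
  refine Matrix.PosDef.of_dotProduct_mulVec_pos
    (Matrix.isHermitian_conjTranspose_mul_mul B hM.1) fun x hx => ?_
  have hinj := Matrix.mulVec_injective_iff_isUnit.2 hB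
  have hBx : B *ᵥ x ≠ 0 := fun h => hx (hinj (by rw [h, Matrix.mulVec_zero]))
  have := hM.dotProduct_mulVec_pos hBx
  simpa only [star_mulVec, dotProduct_mulVec, vecMul_vecMul] using this

lemma conj_posDef {M V : Matrix N N ℝ} (hM : M.PosDef) (hV : IsUnit V) :
    (V * M * star V).PosDef := by
  have hVH : IsUnit Vᴴ := by
    rw [Matrix.isUnit_iff_isUnit_det, Matrix.det_conjTranspose]
    exact ((Matrix.isUnit_iff_isUnit_det _).1 hV).star
  have h := conjT_posDef hM hVH
  rw [Matrix.conjTranspose_conjTranspose] at h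
  rw [Matrix.star_eq_conjTranspose]
  exact h

lemma eigenvalues_lt_one {S : Matrix N N ℝ} (hS : S.IsHermitian)
    (h1S : ((1 : Matrix N N ℝ) - S).PosDef) (i : N) : hS.eigenvalues i < 1 := by
  set v : N → ℝ := ⇑(hS.eigenvectorBasis i) with hv_def
  have hv : S *ᵥ v = hS.eigenvalues i • v := hS.mulVec_eigenvectorBasis i
  have hvne : v ≠ 0 := by
    have h0 := hS.eigenvectorBasis.orthonormal.ne_zero i
    intro h
    exact h0 (by ext j; exact congrFun h j)
  have hq := h1S.dotProduct_mulVec_pos hvne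
  rw [Matrix.sub_mulVec, Matrix.one_mulVec, hv] at hq
  have hvv : 0 < dotProduct (star v) v := Matrix.dotProduct_star_self_pos_iff.2 hvne
  rw [dotProduct_sub, dotProduct_smul, smul_eq_mul] at hq
  nlinarith

lemma eigenvalues_neg {S : Matrix N N ℝ} (hS : S.IsHermitian)
    (hneg : ∀ x : N → ℝ, x ≠ 0 → x ⬝ᵥ S.mulVec x < 0) (i : N) : hS.eigenvalues i < 0 := by
  set v : N → ℝ := ⇑(hS.eigenvectorBasis i) with hv_def
  have hv : S *ᵥ v = hS.eigenvalues i • v := hS.mulVec_eigenvectorBasis i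
  have hvne : v ≠ 0 := by
    have h0 := hS.eigenvectorBasis.orthonormal.ne_zero i
    intro h
    exact h0 (by ext j; exact congrFun h j)
  have hq := hneg v hvne
  have hstar : star v = v := rfl
  have hvv : 0 < dotProduct (star v) v := Matrix.dotProduct_star_self_pos_iff.2 hvne
  rw [hstar] at hvv
  rw [show S.mulVec v = S *ᵥ v from rfl, hv, dotProduct_smul, smul_eq_mul] at hq
  nlinarith

lemma spec_main (d : N → ℝ) (hd : ∀ i, d i ∈ Set.Ioo (0:ℝ) 1)
    {M : Matrix N N ℝ} (hM : M.PosDef) (h1M : ((1 : Matrix N N ℝ) - M).PosDef) :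
    ∀ μ ∈ spectrum ℂ ((diagonal d * M).map (algebraMap ℝ ℂ)),
      μ.im = 0 ∧ 0 < μ.re ∧ μ.re < 1 := by
  intro μ hμ
  set r : N → ℝ := fun i => Real.sqrt (d i) with hr_def
  have hr_pos : ∀ i, 0 < r i := fun i => Real.sqrt_pos.2 (hd i).1
  have hrr : ∀ i, r i * r i = d i := fun i => Real.mul_self_sqrt (hd i).1.le
  set R : Matrix N N ℝ := diagonal r with hR_def
  set R' : Matrix N N ℝ := diagonal (fun i => (r i)⁻¹) with hR'_def
  have hRR' : R * R' = 1 := by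
    rw [hR_def, hR'_def, diagonal_mul_diagonal, ← diagonal_one]
    exact congrArg diagonal (funext fun i => mul_inv_cancel₀ (hr_pos i).ne')
  have hR'R : R' * R = 1 := by
    rw [hR_def, hR'_def, diagonal_mul_diagonal, ← diagonal_one]
    exact congrArg diagonal (funext fun i => inv_mul_cancel₀ (hr_pos i).ne')
  have hRunit : IsUnit R := ⟨⟨R, R', hRR', hR'R⟩, rfl⟩
  have hRH : Rᴴ = R := by
    rw [hR_def, Matrix.diagonal_conjTranspose]
    congr 1
  set S : Matrix N N ℝ := R * M * R with hS_def
  have hS_posDef : S.PosDef := by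
    have := conjT_posDef hM hRunit
    rwa [hRH] at this
  -- 1 - S is positive definite
  have hRT1R : R * diagonal (fun i => (d i)⁻¹) * R = 1 := by
    rw [hR_def, diagonal_mul_diagonal, diagonal_mul_diagonal, ← diagonal_one]
    refine congrArg diagonal (funext fun i => ?_)
    rw [show r i * (d i)⁻¹ * r i = r i * r i * (d i)⁻¹ by ring, hrr i]
    exact mul_inv_cancel₀ (hd i).1.ne'
  have h1S : ((1 : Matrix N N ℝ) - S).PosDef := by
    have hD : (diagonal (fun i => (d i)⁻¹ - 1) : Matrix N N ℝ).PosSemidef :=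
      Matrix.posSemidef_diagonal_iff.mpr fun i => by
        have h1 : 1 ≤ (d i)⁻¹ := (one_le_inv₀ (hd i).1).2 (hd i).2.le
        linarith
    have hinner : ((diagonal (fun i => (d i)⁻¹ - 1) : Matrix N N ℝ) + (1 - M)).PosDef :=
      Matrix.PosDef.posSemidef_add hD h1M
    have hconj := conjT_posDef hinner hRunit
    rw [hRH] at hconj
    have hdiagsplit : (diagonal (fun i => (d i)⁻¹ - 1) : Matrix N N ℝ)
        = diagonal (fun i => (d i)⁻¹) - 1 := by
      rw [← diagonal_one, diagonal_sub]
    have heq : R * ((diagonal (fun i => (d i)⁻¹ - 1) : Matrix N N ℝ) + (1 - M)) * R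
        = 1 - S := by
      rw [hdiagsplit, sub_add_sub_cancel, Matrix.mul_sub, Matrix.sub_mul, hRT1R, hS_def]
    rwa [heq] at hconj
  -- similarity
  have hsim : diagonal d * M = R * S * R' := by
    have h1 : R * S * R' = R * R * M * (R * R') := by
      rw [hS_def]; noncomm_ring
    rw [h1, hRR', mul_one, hR_def, diagonal_mul_diagonal]
    rw [congrArg diagonal (funext fun i => hrr i)]
  set φ := algebraMap ℝ ℂ with hφ
  have hu1 : (R.map φ) * (R'.map φ) = 1 := by
    rw [← Matrix.map_mul, hRR', Matrix.map_one φ (map_zero φ) (map_one φ)]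
  have hu2 : (R'.map φ) * (R.map φ) = 1 := by
    rw [← Matrix.map_mul, hR'R, Matrix.map_one φ (map_zero φ) (map_one φ)]
  have hspec1 : spectrum ℂ ((diagonal d * M).map φ) = spectrum ℂ (S.map φ) := by
    rw [hsim, Matrix.map_mul, Matrix.map_mul]
    exact spectrum.units_conjugate (u := ⟨R.map φ, R'.map φ, hu1, hu2⟩)
  rw [hspec1] at hμ
  -- spectral theorem for S
  have hSh : S.IsHermitian := hS_posDef.1
  have hSspec : S = (hSh.eigenvectorUnitary : Matrix N N ℝ) * diagonal hSh.eigenvalues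
      * star (hSh.eigenvectorUnitary : Matrix N N ℝ) := by
    have := hSh.spectral_theorem
    simpa [RCLike.ofReal_real_eq_id] using this
  set W : Matrix N N ℝ := ↑(hSh.eigenvectorUnitary) with hW_def
  have hW : W ∈ Matrix.unitaryGroup N ℝ := (hSh.eigenvectorUnitary).2
  have hstarmap : (star W).map φ = star (W.map φ) := by
    rw [Matrix.star_eq_conjTranspose, Matrix.star_eq_conjTranspose]
    exact Matrix.conjTranspose_map φ (fun a => (Complex.conj_ofReal a).symm)
  have hWc : W.map φ ∈ Matrix.unitaryGroup N ℂ := by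
    constructor
    · rw [← hstarmap, ← Matrix.map_mul, hW.1, Matrix.map_one φ (map_zero φ) (map_one φ)]
    · rw [← hstarmap, ← Matrix.map_mul, hW.2, Matrix.map_one φ (map_zero φ) (map_one φ)]
  have hmap2 : S.map φ = (W.map φ) * diagonal (fun i => (hSh.eigenvalues i : ℂ))
      * star (W.map φ) := by
    have h0 : S.map ⇑φ = (W * diagonal hSh.eigenvalues * star W).map ⇑φ :=
      congrArg (fun X => Matrix.map X ⇑φ) hSspec
    rw [h0, Matrix.map_mul, Matrix.map_mul, Matrix.diagonal_map (map_zero φ), hstarmap]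
    rfl
  have hspec2 : spectrum ℂ (S.map φ) = Set.range (fun i => (hSh.eigenvalues i : ℂ)) := by
    rw [hmap2,
      show (W.map φ) * diagonal (fun i => (hSh.eigenvalues i : ℂ)) * star (W.map φ)
        = ↑(⟨W.map φ, hWc⟩ : Matrix.unitaryGroup N ℂ)
          * diagonal (fun i => (hSh.eigenvalues i : ℂ))
          * (star ((⟨W.map φ, hWc⟩ : Matrix.unitaryGroup N ℂ)) : Matrix N N ℂ) from rfl,
      Unitary.spectrum_star_right_conjugate, spectrum_diagonal]
  rw [hspec2] at hμ
  obtain ⟨i, rfl⟩ := hμ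
  have he_pos : 0 < hSh.eigenvalues i := hS_posDef.eigenvalues_pos i
  have he_lt : hSh.eigenvalues i < 1 := eigenvalues_lt_one hSh h1S i
  refine ⟨by simp, by simpa using he_pos, by simpa using he_lt⟩

omit [DecidableEq N] in
lemma mul_diag_mul_apply [DecidableEq N] (V W : Matrix N N ℝ) (w : N → ℝ) (i j : N) :
    (V * diagonal w * W) i j = ∑ k, V i k * w k * W k j := by
  rw [Matrix.mul_apply]
  refine Finset.sum_congr rfl fun k _ => ?_
  rw [Matrix.mul_diagonal]

lemma moment_core (V : Matrix N N ℝ) (lam : N → ℝ) (hlam : ∀ i, lam i < 0)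
    (f : ℝ → ℝ) (hf_cont : Continuous f) (hf_pos : ∀ τ : ℝ, 0 < τ → 0 < f τ)
    (hf_int : IntegrableOn f (Set.Ioi 0)) (hf_prob : ∫ τ in Set.Ioi (0:ℝ), f τ = 1) :
    IntegrableOn (fun τ : ℝ => f τ • (V * diagonal (fun i => Real.exp (τ * lam i)) * star V))
      (Set.Ioi 0) ∧
    ∃ m : N → ℝ, (∀ i, m i ∈ Set.Ioo (0:ℝ) 1) ∧
      (∫ τ in Set.Ioi (0:ℝ),
          f τ • (V * diagonal (fun i => Real.exp (τ * lam i)) * star V))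
        = V * diagonal m * star V := by
  set F : ℝ → Matrix N N ℝ :=
    fun τ => f τ • (V * diagonal (fun i => Real.exp (τ * lam i)) * star V) with hF_def
  have hD_cont : Continuous
      fun τ : ℝ => (diagonal (fun i => Real.exp (τ * lam i)) : Matrix N N ℝ) :=
    Continuous.matrix_diagonal
      (continuous_pi fun i => Real.continuous_exp.comp (continuous_id.mul continuous_const))
  have hF_cont : Continuous F :=
    hf_cont.smul ((continuous_const.matrix_mul hD_cont).matrix_mul continuous_const)
  have hexp_le : ∀ (τ : ℝ), 0 < τ → ∀ i, Real.exp (τ * lam i) ≤ 1 := fun τ hτ i =>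
    Real.exp_le_one_iff.2 (by nlinarith [hlam i])
  have hg_int : ∀ i, IntegrableOn (fun τ => f τ * Real.exp (τ * lam i)) (Set.Ioi 0) := by
    intro i
    refine Integrable.mono' hf_int
      ((hf_cont.mul (Real.continuous_exp.comp
        (continuous_id.mul continuous_const))).aestronglyMeasurable.restrict) ?_
    refine (ae_restrict_iff' measurableSet_Ioi).2 (Filter.Eventually.of_forall fun τ hτ => ?_)
    have h2 : 0 ≤ f τ := (hf_pos τ hτ).le
    rw [Real.norm_eq_abs, abs_mul, abs_of_nonneg h2, abs_of_pos (Real.exp_pos _)]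
    nlinarith [hexp_le τ hτ i, Real.exp_pos (τ * lam i)]
  -- integrability of F
  have hF_int : IntegrableOn F (Set.Ioi 0) := by
    set C : ℝ := (Fintype.card N : ℝ) * ((Fintype.card N : ℝ) * ‖V‖ * 1) * ‖star V‖ with hC_def
    refine Integrable.mono' (hf_int.const_mul C) hF_cont.aestronglyMeasurable.restrict ?_
    refine (ae_restrict_iff' measurableSet_Ioi).2 (Filter.Eventually.of_forall fun τ hτ => ?_)
    have hD_le : ‖(diagonal (fun i => Real.exp (τ * lam i)) : Matrix N N ℝ)‖ ≤ 1 := by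
      rw [Matrix.norm_le_iff zero_le_one]
      intro i j
      by_cases h : i = j
      · subst h
        rw [Matrix.diagonal_apply_eq, Real.norm_eq_abs, abs_of_pos (Real.exp_pos _)]
        exact hexp_le τ hτ i
      · rw [Matrix.diagonal_apply_ne _ h]
        simp
    have h1 : ‖V * diagonal (fun i => Real.exp (τ * lam i)) * star V‖ ≤ C := by
      rw [hC_def]
      refine le_trans (norm_mul_le' _ _) ?_
      have h2 : ‖V * diagonal (fun i => Real.exp (τ * lam i))‖
          ≤ (Fintype.card N : ℝ) * ‖V‖ * 1 := by
        refine le_trans (norm_mul_le' _ _) ?_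
        have hcard : (0:ℝ) ≤ (Fintype.card N : ℝ) * ‖V‖ := by positivity
        have := mul_le_mul_of_nonneg_left hD_le hcard
        linarith
      have hc0 : (0:ℝ) ≤ (Fintype.card N : ℝ) := Nat.cast_nonneg _
      exact mul_le_mul_of_nonneg_right (mul_le_mul_of_nonneg_left h2 hc0) (norm_nonneg (star V))
    rw [hF_def]
    have h0 : 0 ≤ f τ := (hf_pos τ hτ).le
    calc ‖f τ • (V * diagonal (fun i => Real.exp (τ * lam i)) * star V)‖
        = f τ * ‖V * diagonal (fun i => Real.exp (τ * lam i)) * star V‖ := by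
          rw [norm_smul, Real.norm_eq_abs, abs_of_nonneg h0]
      _ ≤ f τ * C := by
          have hC0 : 0 ≤ C := by
            refine le_trans ?_ h1; exact norm_nonneg _
          nlinarith
      _ = C * f τ := mul_comm _ _
  -- the moment vector
  set m : N → ℝ := fun i => (∫ τ in Set.Ioi (0:ℝ), f τ * Real.exp (τ * lam i)) with hm_def
  have hIoi_pos : (0 : ENNReal) < volume (Set.Ioi (0:ℝ)) := by
    rw [Real.volume_Ioi]; exact ENNReal.zero_lt_top
  have hm_mem : ∀ i, m i ∈ Set.Ioo (0:ℝ) 1 := by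
    intro i
    constructor
    · refine (setIntegral_pos_iff_support_of_nonneg_ae ?_ (hg_int i)).2 ?_
      · refine (ae_restrict_iff' measurableSet_Ioi).2 (Filter.Eventually.of_forall fun τ hτ => ?_)
        exact mul_nonneg (hf_pos τ hτ).le (Real.exp_pos _).le
      · refine lt_of_lt_of_le hIoi_pos (measure_mono fun τ hτ => ?_)
        exact ⟨(mul_pos (hf_pos τ hτ) (Real.exp_pos _)).ne', hτ⟩
    · have hsub : (1:ℝ) - m i
          = ∫ τ in Set.Ioi (0:ℝ), (f τ - f τ * Real.exp (τ * lam i)) := by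
        rw [MeasureTheory.integral_sub hf_int (hg_int i), hf_prob]
      have hpos : 0 < (1:ℝ) - m i := by
        rw [hsub]
        refine (setIntegral_pos_iff_support_of_nonneg_ae ?_ (hf_int.sub (hg_int i))).2 ?_
        · refine (ae_restrict_iff' measurableSet_Ioi).2
            (Filter.Eventually.of_forall fun τ hτ => ?_)
          simp only [Pi.zero_apply, Pi.sub_apply]
          nlinarith [hexp_le τ hτ i, hf_pos τ hτ]
        · refine lt_of_lt_of_le hIoi_pos (measure_mono fun τ hτ => ?_)
          have hlt : Real.exp (τ * lam i) < 1 :=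
            Real.exp_lt_one_iff.2 (by nlinarith [hlam i, Set.mem_Ioi.1 hτ])
          have hsp : 0 < f τ - f τ * Real.exp (τ * lam i) := by nlinarith [hf_pos τ hτ]
          refine ⟨?_, hτ⟩
          simp only [Function.mem_support, Pi.sub_apply]
          exact hsp.ne'
      linarith
  refine ⟨hF_int, m, hm_mem, ?_⟩
  ext i j
  rw [integral_matrix_entry hF_int i j]
  have hentry : ∀ τ : ℝ, F τ i j
      = ∑ k, (V i k * star V k j) * (f τ * Real.exp (τ * lam k)) := by
    intro τ
    rw [hF_def]
    simp only [Matrix.smul_apply, smul_eq_mul]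
    rw [mul_diag_mul_apply, Finset.mul_sum]
    exact Finset.sum_congr rfl fun k _ => by ring
  simp only [hentry]
  rw [MeasureTheory.integral_finset_sum _ (fun k _ => (hg_int k).const_mul _)]
  have hrhs : (V * diagonal m * star V) i j = ∑ k, (V i k * star V k j) * m k := by
    rw [mul_diag_mul_apply]
    exact Finset.sum_congr rfl fun k _ => by ring
  rw [hrhs]
  exact Finset.sum_congr rfl fun k _ => MeasureTheory.integral_const_mul _ _

lemma exp_spectral (A V : Matrix N N ℝ) (hV : V ∈ Matrix.unitaryGroup N ℝ) (lam : N → ℝ)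
    (hA : A = V * diagonal lam * star V) (τ : ℝ) :
    NormedSpace.exp (τ • A) = V * diagonal (fun i => Real.exp (τ * lam i)) * star V := by
  have hu : IsUnit V := (Unitary.toUnits ⟨V, hV⟩).isUnit
  have hinv : V⁻¹ = star V := by
    rw [Matrix.inv_eq_left_inv]
    exact hV.1
  have h1 : τ • A = V * diagonal (fun i => τ * lam i) * V⁻¹ := by
    rw [hA, hinv, ← smul_mul_assoc, ← mul_smul_comm, ← diagonal_smul]
    rfl
  rw [h1, Matrix.exp_conj _ _ hu, Matrix.exp_diagonal, hinv]
  congr 2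
  funext i
  simp [Pi.exp_def, ← Real.exp_eq_exp_ℝ]

lemma real_spectral {A : Matrix N N ℝ} (hA : A.IsHermitian) :
    A = (hA.eigenvectorUnitary : Matrix N N ℝ) * diagonal hA.eigenvalues
      * star (hA.eigenvectorUnitary : Matrix N N ℝ) := by
  have := hA.spectral_theorem
  simpa [RCLike.ofReal_real_eq_id] using this

lemma spectrum_conj_diag (V : Matrix N N ℝ) (hV : V ∈ Matrix.unitaryGroup N ℝ) (m : N → ℝ) :
    spectrum ℝ (V * diagonal m * star V) = Set.range m := by
  rw [show V * diagonal m * star V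
      = ↑(⟨V, hV⟩ : Matrix.unitaryGroup N ℝ) * diagonal m
        * (star ((⟨V, hV⟩ : Matrix.unitaryGroup N ℝ)) : Matrix N N ℝ) from rfl,
    Unitary.spectrum_star_right_conjugate, spectrum_diagonal]

lemma conj_diag_posDef (V : Matrix N N ℝ) (hV : V ∈ Matrix.unitaryGroup N ℝ) {m : N → ℝ}
    (hm : ∀ i, 0 < m i) : (V * diagonal m * star V).PosDef :=
  conj_posDef (Matrix.posDef_diagonal_iff.mpr hm) ((Unitary.toUnits ⟨V, hV⟩).isUnit)

lemma one_sub_conj (V : Matrix N N ℝ) (hV : V ∈ Matrix.unitaryGroup N ℝ) (m : N → ℝ) :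
    (1 : Matrix N N ℝ) - V * diagonal m * star V
      = V * diagonal (fun i => 1 - m i) * star V := by
  have h1 : (diagonal (fun i => 1 - m i) : Matrix N N ℝ) = 1 - diagonal m := by
    rw [← diagonal_one, diagonal_sub]
  rw [h1, Matrix.mul_sub, Matrix.sub_mul, Matrix.mul_one, hV.2]

lemma star_kronecker (A B : Matrix N N ℝ) : star (A ⊗ₖ B) = star A ⊗ₖ star B := by
  ext p q
  simp only [Matrix.star_apply, Matrix.kroneckerMap_apply, star_trivial]

lemma kron_unitary {V : Matrix N N ℝ} (hV : V ∈ Matrix.unitaryGroup N ℝ) :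
    V ⊗ₖ V ∈ Matrix.unitaryGroup (N × N) ℝ := by
  constructor
  · rw [star_kronecker, ← Matrix.mul_kronecker_mul, hV.1, Matrix.one_kronecker_one]
  · rw [star_kronecker, ← Matrix.mul_kronecker_mul, hV.2, Matrix.one_kronecker_one]

lemma kron_conj (V : Matrix N N ℝ) (w : N → ℝ) :
    (V * diagonal w * star V) ⊗ₖ (V * diagonal w * star V)
      = (V ⊗ₖ V) * diagonal (fun p : N × N => w p.1 * w p.2) * star (V ⊗ₖ V) := by
  rw [Matrix.mul_kronecker_mul, Matrix.mul_kronecker_mul, Matrix.diagonal_kronecker_diagonal,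
    star_kronecker]

lemma eq_diagonal_of_offdiag_zero (K : Matrix N N ℝ) (h : ∀ p q, p ≠ q → K p q = 0) :
    K = diagonal (fun p => K p p) := by
  ext p q
  by_cases hpq : p = q
  · subst hpq; rw [Matrix.diagonal_apply_eq]
  · rw [Matrix.diagonal_apply_ne _ hpq]; exact h p q hpq

end TTSHS

/-- **Remark 1: existence of the first two steady-state moments irrespective of the
inter-event time distribution.** -/
theorem ttshs_remark1
    (n : ℕ) (A J Q : Matrix (Fin n) (Fin n) ℝ)
    (hA_symm : A.IsSymm)
    (hA_negdef : ∀ x : Fin n → ℝ, x ≠ 0 → x ⬝ᵥ A.mulVec x < 0)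
    (hJ_diag : ∀ i j : Fin n, i ≠ j → J i j = 0)
    (hJ_mem : ∀ i : Fin n, J i i ∈ Set.Ioo (0:ℝ) 1)
    (hQ_diag : ∀ i j : Fin n, i ≠ j → Q i j = 0)
    (hJQ_mem : ∀ q : Fin n × Fin n, (J ⊗ₖ J + Q ⊗ₖ Q) q q ∈ Set.Ioo (0:ℝ) 1)
    (f : ℝ → ℝ) (hf_cont : Continuous f)
    (hf_pos : ∀ τ : ℝ, 0 < τ → 0 < f τ) (hf_supp : ∀ τ : ℝ, τ ≤ 0 → f τ = 0)
    (hf_prob : ∫ τ in Set.Ioi (0:ℝ), f τ = 1) :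
    -- (a) the first moment generating matrix
    (@IntegrableOn ℝ _ _ _ NormedAddCommGroup.toENormedAddCommMonoid.toContinuousENorm (fun τ : ℝ => f τ • NormedSpace.exp (τ • A)) (Set.Ioi 0) volume ∧
      (∫ τ in Set.Ioi (0:ℝ), f τ • NormedSpace.exp (τ • A)).PosDef ∧
      (∀ μ ∈ spectrum ℝ (∫ τ in Set.Ioi (0:ℝ), f τ • NormedSpace.exp (τ • A)), μ < 1) ∧
      (∀ μ ∈ spectrum ℂ ((J * ∫ τ in Set.Ioi (0:ℝ), f τ • NormedSpace.exp (τ • A)).map (algebraMap ℝ ℂ)),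
        μ.im = 0 ∧ 0 < μ.re ∧ μ.re < 1)) ∧
    -- (b) the second moment generating matrix
    (@IntegrableOn ℝ _ _ _ NormedAddCommGroup.toENormedAddCommMonoid.toContinuousENorm (fun τ : ℝ => f τ • (NormedSpace.exp (τ • A) ⊗ₖ NormedSpace.exp (τ • A))) (Set.Ioi 0) volume ∧
      specLt1 ((J ⊗ₖ J + Q ⊗ₖ Q) *
        ∫ τ in Set.Ioi (0:ℝ), f τ • (NormedSpace.exp (τ • A) ⊗ₖ NormedSpace.exp (τ • A)))) := by
  classical
  have hf_int : IntegrableOn f (Set.Ioi 0) := by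
    by_contra h
    rw [MeasureTheory.integral_undef h] at hf_prob
    exact one_ne_zero hf_prob.symm
  have hA_herm : A.IsHermitian := hA_symm
  set lam := hA_herm.eigenvalues with hlam_def
  set V : Matrix (Fin n) (Fin n) ℝ := ↑(hA_herm.eigenvectorUnitary) with hV_def
  have hV : V ∈ Matrix.unitaryGroup (Fin n) ℝ := (hA_herm.eigenvectorUnitary).2
  have hA_eq : A = V * diagonal lam * star V := TTSHS.real_spectral hA_herm
  have hlam : ∀ i, lam i < 0 := TTSHS.eigenvalues_neg hA_herm hA_negdef
  have hexp : ∀ τ : ℝ, NormedSpace.exp (τ • A) = V * diagonal (fun i => Real.exp (τ * lam i)) * star V :=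
    TTSHS.exp_spectral A V hV lam hA_eq
  obtain ⟨hInt1, m, hm, hMeq⟩ := TTSHS.moment_core V lam hlam f hf_cont hf_pos hf_int hf_prob
  have hJ_eq : J = diagonal (fun i => J i i) := by
    have := TTSHS.eq_diagonal_of_offdiag_zero J hJ_diag
    exact this
  -- part (b) data
  set lam2 : Fin n × Fin n → ℝ := fun p => lam p.1 + lam p.2 with hlam2_def
  have hlam2 : ∀ p, lam2 p < 0 := fun p => add_neg (hlam p.1) (hlam p.2)
  have hVV : V ⊗ₖ V ∈ Matrix.unitaryGroup (Fin n × Fin n) ℝ := TTSHS.kron_unitary hV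
  have hexp2 : ∀ τ : ℝ, NormedSpace.exp (τ • A) ⊗ₖ NormedSpace.exp (τ • A)
      = (V ⊗ₖ V) * diagonal (fun p => Real.exp (τ * lam2 p)) * star (V ⊗ₖ V) := by
    intro τ
    rw [hexp τ, TTSHS.kron_conj]
    have harg : (fun p : Fin n × Fin n => Real.exp (τ * lam p.1) * Real.exp (τ * lam p.2))
        = fun p => Real.exp (τ * lam2 p) := by
      funext p
      rw [← Real.exp_add]
      congr 1
      simp only [hlam2_def]
      ring
    rw [harg]
  obtain ⟨hInt2, m2, hm2, hM2eq⟩ :=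
    TTSHS.moment_core (V ⊗ₖ V) lam2 hlam2 f hf_cont hf_pos hf_int hf_prob
  have hK_eq : J ⊗ₖ J + Q ⊗ₖ Q
      = diagonal (fun p => (J ⊗ₖ J + Q ⊗ₖ Q) p p) := by
    refine TTSHS.eq_diagonal_of_offdiag_zero _ fun p q hpq => ?_
    have hsplit : p.1 ≠ q.1 ∨ p.2 ≠ q.2 := by
      by_contra hc
      push_neg at hc
      exact hpq (Prod.ext hc.1 hc.2)
    simp only [Matrix.add_apply, Matrix.kroneckerMap_apply]
    rcases hsplit with h1 | h1
    · rw [hJ_diag _ _ h1, hQ_diag _ _ h1, zero_mul, zero_mul, add_zero]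
    · rw [hJ_diag _ _ h1, hQ_diag _ _ h1, mul_zero, mul_zero, add_zero]
  -- assembled facts
  have heq1 : (∫ τ in Set.Ioi (0:ℝ), f τ • NormedSpace.exp (τ • A)) = V * diagonal m * star V := by
    simp only [hexp]
    exact hMeq
  have heq2 : (∫ τ in Set.Ioi (0:ℝ), f τ • (NormedSpace.exp (τ • A) ⊗ₖ NormedSpace.exp (τ • A)))
      = (V ⊗ₖ V) * diagonal m2 * star (V ⊗ₖ V) := by
    simp only [hexp2]
    exact hM2eq
  have hMpos : (V * diagonal m * star V).PosDef :=
    TTSHS.conj_diag_posDef V hV fun i => (hm i).1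
  have h1Mpos : ((1 : Matrix (Fin n) (Fin n) ℝ) - V * diagonal m * star V).PosDef := by
    rw [TTSHS.one_sub_conj V hV m]
    exact TTSHS.conj_diag_posDef V hV fun i => sub_pos.2 (hm i).2
  have hM2pos : ((V ⊗ₖ V) * diagonal m2 * star (V ⊗ₖ V)).PosDef :=
    TTSHS.conj_diag_posDef _ hVV fun p => (hm2 p).1
  have h1M2pos : ((1 : Matrix (Fin n × Fin n) (Fin n × Fin n) ℝ)
      - (V ⊗ₖ V) * diagonal m2 * star (V ⊗ₖ V)).PosDef := by
    rw [TTSHS.one_sub_conj _ hVV m2]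
    exact TTSHS.conj_diag_posDef _ hVV fun p => sub_pos.2 (hm2 p).2
  refine ⟨⟨?_, ?_, ?_, ?_⟩, ?_, ?_⟩
  · simp only [hexp]; exact hInt1
  · rw [heq1]; exact hMpos
  · intro μ hμ
    rw [heq1, TTSHS.spectrum_conj_diag V hV m] at hμ
    obtain ⟨i, rfl⟩ := hμ
    exact (hm i).2
  · intro μ hμ
    rw [heq1, hJ_eq] at hμ
    exact TTSHS.spec_main _ hJ_mem hMpos h1Mpos μ hμ
  · simp only [hexp2]; exact hInt2
  · intro μ hμ
    rw [heq2, hK_eq] at hμ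
    obtain ⟨him, hre0, hre1⟩ := TTSHS.spec_main _ hJQ_mem hM2pos h1M2pos μ hμ
    have hμ_eq : μ = (μ.re : ℂ) := Complex.ext rfl (by simp [him])
    rw [hμ_eq, Complex.norm_real, Real.norm_eq_abs, abs_of_pos hre0]
    exact hre1
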